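/- Let κ₀ > 0 be a real number and suppose κ(x,y) ≥ κ₀ for every pair of adjacent vertices x, y of G. Let d_max and d_min denote the maximum and minimum vertex degrees of G. Then every nonzero real eigenvalue λ of the graph Laplacian (i.e. every λ ≠ 0 for which there exists a function f : V → ℝ, not identically zero, with Δf = λ·f) satisfies λ ≥ d_max·d_min·κ₀² / (κ₀·d_max + 2·(d_max − d_min)). -/

import Mathlib

open Finset Filter Topology

noncomputable section

/-- A coupling between two (probability) mass functions `μ` and `ν` on a finite
vertex set: a matrix with values in `[0,1]` whose row sums are `μ` and whose
column sums are `ν`. -/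
def IsCoupling {V : Type*} [Fintype V] (A : V → V → ℝ) (μ ν : V → ℝ) : Prop :=
  (∀ x y, 0 ≤ A x y ∧ A x y ≤ 1) ∧
  (∀ x, ∑ y, A x y = μ x) ∧
  (∀ y, ∑ x, A x y = ν y)

/-- The (1-)Wasserstein distance between two mass functions on the vertex set of a
graph, with respect to the graph distance. -/
def Wass {V : Type*} [Fintype V] (G : SimpleGraph V) (μ ν : V → ℝ) : ℝ :=
  sInf {c | ∃ A : V → V → ℝ, IsCoupling A μ ν ∧
    c = ∑ x, ∑ y, A x y * (G.dist x y : ℝ)}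

/-- The probability measure `m_x^α`: mass `α` at `x`, mass `(1-α)/d_x` at each
neighbor of `x`, and `0` elsewhere. -/
def mMeas {V : Type*} [Fintype V] [DecidableEq V] (G : SimpleGraph V)
    [DecidableRel G.Adj] (α : ℝ) (x : V) : V → ℝ :=
  fun z => if z = x then α else if G.Adj x z then (1 - α) / (G.degree x : ℝ) else 0

/-- The `α`-Ricci curvature `κ_α(x,y) = 1 - W(m_x^α, m_y^α)/d(x,y)`. -/
def kappaAlpha {V : Type*} [Fintype V] [DecidableEq V] (G : SimpleGraph V)
    [DecidableRel G.Adj] (α : ℝ) (x y : V) : ℝ :=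
  1 - Wass G (mMeas G α x) (mMeas G α y) / (G.dist x y : ℝ)

/-- The Lin–Lu–Yau Ricci curvature `κ(x,y) = lim_{α→1⁻} κ_α(x,y)/(1-α)`. -/
def kappa {V : Type*} [Fintype V] [DecidableEq V] (G : SimpleGraph V)
    [DecidableRel G.Adj] (x y : V) : ℝ :=
  limUnder (𝓝[<] (1 : ℝ)) (fun α => kappaAlpha G α x y / (1 - α))

/-- The (non-normalized) graph Laplacian `(Δf)(x) = d_x f(x) - ∑_{y ~ x} f(y)`. -/
def lap {V : Type*} [Fintype V] [DecidableEq V] (G : SimpleGraph V)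
    [DecidableRel G.Adj] (f : V → ℝ) (x : V) : ℝ :=
  (G.degree x : ℝ) * f x - ∑ y ∈ G.neighborFinset x, f y

end

set_option linter.unusedSectionVars false
set_option linter.unusedVariables false
set_option linter.unnecessarySimpa false
set_option linter.deprecated false

section Aux

variable {V : Type*} [Fintype V] [DecidableEq V] (G : SimpleGraph V) [DecidableRel G.Adj]

lemma sum_mMeas_mul (α : ℝ) (x : V) (φ : V → ℝ) :
    ∑ z, mMeas G α x z * φ z
      = α * φ x + (1 - α) / (G.degree x : ℝ) * ∑ z ∈ G.neighborFinset x, φ z := by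
  have key : ∀ z, mMeas G α x z * φ z
      = (if z = x then α * φ x else 0)
        + (if G.Adj x z then (1 - α) / (G.degree x : ℝ) * φ z else 0) := by
    intro z
    by_cases hz : z = x
    · subst hz
      simp [mMeas, G.irrefl]
    · by_cases ha : G.Adj x z <;> simp [mMeas, hz, ha]
  rw [Finset.sum_congr rfl fun z _ => key z, Finset.sum_add_distrib]
  congr 1
  · simp
  · rw [SimpleGraph.neighborFinset_eq_filter, Finset.sum_filter, Finset.mul_sum]
    exact Finset.sum_congr rfl fun z _ => by by_cases ha : G.Adj x z <;> simp [ha]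

lemma sum_mMeas (α : ℝ) (x : V) (hd : 0 < G.degree x) : ∑ z, mMeas G α x z = 1 := by
  have h1 := sum_mMeas_mul G α x (fun _ => 1)
  simp only [mul_one] at h1
  rw [h1, Finset.sum_const, SimpleGraph.card_neighborFinset_eq_degree, nsmul_eq_mul, mul_one]
  have hd' : (G.degree x : ℝ) ≠ 0 := by positivity
  field_simp
  ring


lemma mMeas_nonneg {α : ℝ} (hα0 : 0 ≤ α) (hα1 : α ≤ 1) (x z : V) :
    0 ≤ mMeas G α x z := by
  unfold mMeas
  split_ifs
  · exact hα0
  · exact div_nonneg (by linarith) (by positivity)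
  · exact le_refl 0

lemma mMeas_le_one {α : ℝ} (hα0 : 0 ≤ α) (hα1 : α ≤ 1) (hd : 0 < G.degree x)
    (z : V) : mMeas G α x z ≤ 1 := by
  unfold mMeas
  have h1 : (1:ℝ) ≤ (G.degree x : ℝ) := by exact_mod_cast hd
  split_ifs
  · exact hα1
  · rw [div_le_one (by linarith)]; linarith
  · norm_num

lemma isCoupling_prod {μ ν : V → ℝ} (hμ0 : ∀ z, 0 ≤ μ z) (hμ1 : ∀ z, μ z ≤ 1)
    (hν0 : ∀ z, 0 ≤ ν z) (hν1 : ∀ z, ν z ≤ 1)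
    (hμs : ∑ z, μ z = 1) (hνs : ∑ z, ν z = 1) :
    IsCoupling (fun u v => μ u * ν v) μ ν := by
  refine ⟨fun u v => ⟨mul_nonneg (hμ0 u) (hν0 v), ?_⟩, fun u => ?_, fun v => ?_⟩
  · calc μ u * ν v ≤ 1 * 1 := mul_le_mul (hμ1 u) (hν1 v) (hν0 v) zero_le_one
    _ = 1 := by ring
  · rw [← Finset.mul_sum, hνs, mul_one]
  · rw [← Finset.sum_mul, hμs, one_mul]

lemma wass_bddBelow (μ ν : V → ℝ) :
    BddBelow {c | ∃ A : V → V → ℝ, IsCoupling A μ ν ∧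
      c = ∑ x, ∑ y, A x y * (G.dist x y : ℝ)} := by
  refine ⟨0, fun c hc => ?_⟩
  obtain ⟨A, hA, rfl⟩ := hc
  apply Finset.sum_nonneg; intro x _; apply Finset.sum_nonneg; intro y _
  exact mul_nonneg (hA.1 x y).1 (by positivity)

lemma wass_le {μ ν : V → ℝ} {A : V → V → ℝ} (hA : IsCoupling A μ ν) :
    Wass G μ ν ≤ ∑ x, ∑ y, A x y * (G.dist x y : ℝ) :=
  csInf_le (wass_bddBelow G μ ν) ⟨A, hA, rfl⟩

lemma le_wass {μ ν : V → ℝ} {b : ℝ} (hne : ∃ A : V → V → ℝ, IsCoupling A μ ν)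
    (hb : ∀ A : V → V → ℝ, IsCoupling A μ ν →
      b ≤ ∑ x, ∑ y, A x y * (G.dist x y : ℝ)) :
    b ≤ Wass G μ ν := by
  apply le_csInf
  · obtain ⟨A, hA⟩ := hne
    exact ⟨_, A, hA, rfl⟩
  · rintro c ⟨A, hA, rfl⟩
    exact hb A hA

/-- Easy direction of Kantorovich duality. -/
lemma sum_sub_le_cost {μ ν : V → ℝ} {A : V → V → ℝ} (hA : IsCoupling A μ ν)
    {g : V → ℝ} {L : ℝ} (hL : 0 ≤ L)
    (hg : ∀ u v, g u - g v ≤ L * (G.dist u v : ℝ)) :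
    ∑ u, μ u * g u - ∑ v, ν v * g v
      ≤ L * ∑ x, ∑ y, A x y * (G.dist x y : ℝ) := by
  have h1 : ∑ u, μ u * g u = ∑ u, ∑ v, A u v * g u := by
    refine Finset.sum_congr rfl fun u _ => ?_
    rw [← Finset.sum_mul, hA.2.1 u, mul_comm]
  have h2 : ∑ v, ν v * g v = ∑ u, ∑ v, A u v * g v := by
    rw [Finset.sum_comm]
    refine Finset.sum_congr rfl fun v _ => ?_
    rw [← Finset.sum_mul, hA.2.2 v, mul_comm]
  rw [h1, h2, ← Finset.sum_sub_distrib, Finset.mul_sum]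
  refine Finset.sum_le_sum fun u _ => ?_
  rw [← Finset.sum_sub_distrib, Finset.mul_sum]
  refine Finset.sum_le_sum fun v _ => ?_
  rw [← mul_sub]
  rw [show L * (A u v * (G.dist u v : ℝ)) = A u v * (L * (G.dist u v : ℝ)) by ring]
  exact mul_le_mul_of_nonneg_left (hg u v) (hA.1 u v).1

lemma sum_sub_le_wass {μ ν : V → ℝ} (hne : ∃ A : V → V → ℝ, IsCoupling A μ ν)
    {g : V → ℝ} {L : ℝ} (hL : 0 < L)
    (hg : ∀ u v, g u - g v ≤ L * (G.dist u v : ℝ)) :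
    ∑ u, μ u * g u - ∑ v, ν v * g v ≤ L * Wass G μ ν := by
  rw [← div_le_iff₀' hL]
  refine le_wass G hne fun A hA => ?_
  rw [div_le_iff₀' hL]
  exact sum_sub_le_cost G hA hL.le hg


lemma mMeas_coupling (hdeg : ∀ z : V, 0 < G.degree z) {α : ℝ} (hα0 : 0 ≤ α) (hα1 : α ≤ 1)
    (x y : V) : ∃ A : V → V → ℝ, IsCoupling A (mMeas G α x) (mMeas G α y) :=
  ⟨_, isCoupling_prod (mMeas_nonneg G hα0 hα1 x) (mMeas_le_one G hα0 hα1 (hdeg x))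
    (mMeas_nonneg G hα0 hα1 y) (mMeas_le_one G hα0 hα1 (hdeg y))
    (sum_mMeas G α x (hdeg x)) (sum_mMeas G α y (hdeg y))⟩

variable {G}

lemma adj_dist_one {x y : V} (h : G.Adj x y) : G.dist x y = 1 :=
  SimpleGraph.dist_eq_one_iff_adj.mpr h

lemma kappaAlpha_adj {x y : V} (h : G.Adj x y) (α : ℝ) :
    kappaAlpha G α x y = 1 - Wass G (mMeas G α x) (mMeas G α y) := by
  unfold kappaAlpha
  rw [adj_dist_one h]
  norm_num

lemma wass_adj_eq {x y : V} (h : G.Adj x y) {α : ℝ} (hα : α ≠ 1) :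
    Wass G (mMeas G α x) (mMeas G α y)
      = 1 - (1 - α) * (kappaAlpha G α x y / (1 - α)) := by
  have h1 : (1:ℝ) - α ≠ 0 := by
    intro hz; apply hα; linarith [hz]
  rw [kappaAlpha_adj h]
  field_simp
  ring

lemma wass_adj_mono {x y : V} (hxy : G.Adj x y) (hdeg : ∀ z : V, 0 < G.degree z)
    {α α' : ℝ} (hα : α ∈ Set.Ioo (0:ℝ) 1) (hα' : α' ∈ Set.Ioo (0:ℝ) 1) (hle : α ≤ α') :
    (1 - α) * Wass G (mMeas G α' x) (mMeas G α' y)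
      ≤ (1 - α') * Wass G (mMeas G α x) (mMeas G α y) + (α' - α) := by
  have h1α : (0:ℝ) < 1 - α := by linarith [hα.2]
  have h1α' : (0:ℝ) < 1 - α' := by linarith [hα'.2]
  have hne : (1:ℝ) - α ≠ 0 := h1α.ne'
  set c : ℝ := (1 - α') / (1 - α) with hc
  have hc0 : 0 < c := div_pos h1α' h1α
  have hc1 : c ≤ 1 := by rw [hc, div_le_one h1α]; linarith
  obtain ⟨W, hWdef⟩ : ∃ W, Wass G (mMeas G α x) (mMeas G α y) = W := ⟨_, rfl⟩
  obtain ⟨W', hW'def⟩ : ∃ W', Wass G (mMeas G α' x) (mMeas G α' y) = W' := ⟨_, rfl⟩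
  rw [hWdef, hW'def]
  have key : ∀ A : V → V → ℝ, IsCoupling A (mMeas G α x) (mMeas G α y) →
      W' ≤ c * (∑ u, ∑ v, A u v * (G.dist u v : ℝ)) + (1 - c) := by
    intro A hA
    set A' : V → V → ℝ :=
      fun u v => c * A u v + (1 - c) * (if u = x ∧ v = y then 1 else 0) with hA'def
    have hb : ∀ u v, 0 ≤ A' u v ∧ A' u v ≤ 1 := by
      intro u v
      obtain ⟨h0, h1⟩ := hA.1 u v
      have he : A' u v = c * A u v + (1 - c) * (if u = x ∧ v = y then 1 else 0) := rfl
      rw [he]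
      by_cases huv : u = x ∧ v = y
      · rw [if_pos huv]; constructor <;> nlinarith
      · rw [if_neg huv]; constructor <;> nlinarith
    have hrow : ∀ u, ∑ v, A' u v = mMeas G α' x u := by
      intro u
      have hstep : ∑ v, A' u v = c * mMeas G α x u + (1 - c) * (if u = x then 1 else 0) := by
        simp only [hA'def]
        rw [Finset.sum_add_distrib, ← Finset.mul_sum, hA.2.1 u, ← Finset.mul_sum]
        congr 2
        by_cases hu : u = x
        · simp [hu]
        · simp [hu]
      rw [hstep]
      by_cases hu : u = x
      · subst hu
        simp only [mMeas, if_pos rfl, ↓reduceIte]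
        rw [hc]; field_simp; try ring
      · by_cases hadj : G.Adj x u
        · simp only [mMeas, if_neg hu, if_pos hadj]
          have hd : (G.degree x : ℝ) ≠ 0 := Nat.cast_ne_zero.mpr (hdeg x).ne'
          rw [hc]; field_simp; try ring
        · simp only [mMeas, if_neg hu, if_neg hadj]
          ring
    have hcol : ∀ v, ∑ u, A' u v = mMeas G α' y v := by
      intro v
      have hstep : ∑ u, A' u v = c * mMeas G α y v + (1 - c) * (if v = y then 1 else 0) := by
        simp only [hA'def]
        rw [Finset.sum_add_distrib, ← Finset.mul_sum, hA.2.2 v, ← Finset.mul_sum]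
        congr 2
        by_cases hv : v = y
        · simp [hv]
        · simp [hv]
      rw [hstep]
      by_cases hv : v = y
      · subst hv
        simp only [mMeas, if_pos rfl, ↓reduceIte]
        rw [hc]; field_simp; try ring
      · by_cases hadj : G.Adj y v
        · simp only [mMeas, if_neg hv, if_pos hadj]
          have hd : (G.degree y : ℝ) ≠ 0 := Nat.cast_ne_zero.mpr (hdeg y).ne'
          rw [hc]; field_simp; try ring
        · simp only [mMeas, if_neg hv, if_neg hadj]
          ring
    have hcost2 : ∑ u, ∑ v, (if u = x ∧ v = y then (1:ℝ) else 0) * (G.dist u v : ℝ)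
        = (G.dist x y : ℝ) := by
      have hrow2 : ∀ u, (∑ v, (if u = x ∧ v = y then (1:ℝ) else 0) * (G.dist u v : ℝ))
          = if u = x then (G.dist u y : ℝ) else 0 := by
        intro u
        by_cases hu : u = x
        · simp [hu]
        · simp [hu]
      rw [Finset.sum_congr rfl fun u _ => hrow2 u]
      simp
    have hcost : ∑ u, ∑ v, A' u v * (G.dist u v : ℝ)
        = c * (∑ u, ∑ v, A u v * (G.dist u v : ℝ))
          + (1 - c) * ∑ u, ∑ v, (if u = x ∧ v = y then (1:ℝ) else 0) * (G.dist u v : ℝ) := by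
      have expand : ∀ u v, A' u v * (G.dist u v : ℝ)
          = c * (A u v * (G.dist u v : ℝ))
            + (1 - c) * ((if u = x ∧ v = y then (1:ℝ) else 0) * (G.dist u v : ℝ)) := by
        intro u v
        simp only [hA'def]
        ring
      simp only [expand, Finset.sum_add_distrib, ← Finset.mul_sum]
    have hW'le := wass_le G (⟨hb, hrow, hcol⟩ : IsCoupling A' (mMeas G α' x) (mMeas G α' y))
    rw [hW'def, hcost, hcost2, adj_dist_one hxy] at hW'le
    push_cast at hW'le
    linarith
  have hWle : W' - (1 - c) ≤ W * c := by
    have hdivle := le_wass G (mMeas_coupling G hdeg hα.1.le hα.2.le x y)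
      (b := (W' - (1 - c)) / c) fun A hA => by
        rw [div_le_iff₀ hc0]
        nlinarith [key A hA]
    rw [hWdef] at hdivle
    exact (div_le_iff₀ hc0).mp hdivle
  have hprod := mul_le_mul_of_nonneg_right hWle h1α.le
  have hc' : c * (1 - α) = 1 - α' := div_mul_cancel₀ _ hne
  have hWc : W * (c * (1 - α)) = W * (1 - α') := by rw [hc']
  nlinarith [hprod, hc', hWc]


lemma gfun_mono {x y : V} (hxy : G.Adj x y) (hdeg : ∀ z : V, 0 < G.degree z) :
    MonotoneOn (fun α => kappaAlpha G α x y / (1 - α)) (Set.Ioo (0:ℝ) 1) := by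
  intro α hα α' hα' hle
  have h1α : (0:ℝ) < 1 - α := by linarith [hα.2]
  have h1α' : (0:ℝ) < 1 - α' := by linarith [hα'.2]
  have hmono := wass_adj_mono hxy hdeg hα hα' hle
  simp only
  rw [kappaAlpha_adj hxy, kappaAlpha_adj hxy, div_le_div_iff₀ h1α h1α']
  nlinarith [hmono]

lemma gfun_le_two (hconn : G.Connected) {x y : V} (hxy : G.Adj x y)
    (hdeg : ∀ z : V, 0 < G.degree z) {α : ℝ} (hα : α ∈ Set.Ioo (0:ℝ) 1) :
    kappaAlpha G α x y / (1 - α) ≤ 2 := by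
  have h1α : (0:ℝ) < 1 - α := by linarith [hα.2]
  rw [div_le_iff₀ h1α, kappaAlpha_adj hxy]
  have hlip : ∀ u v : V, (G.dist u y : ℝ) - (G.dist v y : ℝ) ≤ 1 * (G.dist u v : ℝ) := by
    intro u v
    have := hconn.dist_triangle (u := u) (v := v) (w := y)
    have h2 : (G.dist u y : ℝ) ≤ (G.dist u v : ℝ) + (G.dist v y : ℝ) := by exact_mod_cast this
    linarith
  have hdual := sum_sub_le_wass G (mMeas_coupling G hdeg hα.1.le hα.2.le x y)
      (g := fun z => (G.dist z y : ℝ)) one_pos hlip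
  rw [one_mul] at hdual
  have hx : ∑ z, mMeas G α x z * (G.dist z y : ℝ)
      = α * (G.dist x y : ℝ) + (1 - α) / (G.degree x : ℝ) * ∑ z ∈ G.neighborFinset x, (G.dist z y : ℝ) :=
    sum_mMeas_mul G α x _
  have hy : ∑ z, mMeas G α y z * (G.dist z y : ℝ)
      = α * (G.dist y y : ℝ) + (1 - α) / (G.degree y : ℝ) * ∑ z ∈ G.neighborFinset y, (G.dist z y : ℝ) :=
    sum_mMeas_mul G α y _
  have hyy : (G.dist y y : ℝ) = 0 := by
    rw [SimpleGraph.dist_self]; norm_num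
  have hysum : ∑ z ∈ G.neighborFinset y, (G.dist z y : ℝ) = (G.degree y : ℝ) := by
    rw [Finset.sum_congr rfl fun z hz => ?_, Finset.sum_const,
      SimpleGraph.card_neighborFinset_eq_degree, nsmul_eq_mul, mul_one]
    rw [SimpleGraph.dist_comm, adj_dist_one ((SimpleGraph.mem_neighborFinset _ _ _).mp hz)]
    norm_num
  have hxsum : (0:ℝ) ≤ ∑ z ∈ G.neighborFinset x, (G.dist z y : ℝ) := by
    apply Finset.sum_nonneg; intro z _; positivity
  have hdegy : (G.degree y : ℝ) ≠ 0 := Nat.cast_ne_zero.mpr (hdeg y).ne'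
  have hdegx : (0:ℝ) < (G.degree x : ℝ) := by exact_mod_cast hdeg x
  rw [hx, hy, hyy, hysum, adj_dist_one hxy] at hdual
  rw [div_mul_cancel₀ _ hdegy] at hdual
  push_cast at hdual
  have hterm : (0:ℝ) ≤ (1 - α) / (G.degree x : ℝ) * ∑ z ∈ G.neighborFinset x, (G.dist z y : ℝ) := by
    apply mul_nonneg (div_nonneg h1α.le hdegx.le) hxsum
  linarith

lemma gfun_bddAbove (hconn : G.Connected) {x y : V} (hxy : G.Adj x y)
    (hdeg : ∀ z : V, 0 < G.degree z) :
    BddAbove ((fun α => kappaAlpha G α x y / (1 - α)) '' Set.Ioo (0:ℝ) 1) := by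
  refine ⟨2, ?_⟩
  rintro _ ⟨a, ha, rfl⟩
  exact gfun_le_two hconn hxy hdeg ha

lemma gfun_tendsto (hconn : G.Connected) {x y : V} (hxy : G.Adj x y)
    (hdeg : ∀ z : V, 0 < G.degree z) :
    Filter.Tendsto (fun α => kappaAlpha G α x y / (1 - α)) (𝓝[<] (1:ℝ))
      (𝓝 (kappa G x y)) := by
  have hne : (Set.Ioo (0:ℝ) 1).Nonempty := ⟨1/2, by constructor <;> norm_num⟩
  have ht := MonotoneOn.tendsto_nhdsWithin_Ioo_left hne (gfun_mono hxy hdeg)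
    (gfun_bddAbove hconn hxy hdeg)
  have heq : kappa G x y
      = sSup ((fun α => kappaAlpha G α x y / (1 - α)) '' Set.Ioo (0:ℝ) 1) := ht.limUnder_eq
  rwa [heq]


lemma adj_sum_comm (F : V → V → ℝ) :
    ∑ x, ∑ y ∈ G.neighborFinset x, F x y = ∑ y, ∑ x ∈ G.neighborFinset y, F x y := by
  simp only [SimpleGraph.neighborFinset_eq_filter, Finset.sum_filter]
  rw [Finset.sum_comm]
  refine Finset.sum_congr rfl fun y _ => Finset.sum_congr rfl fun x _ => ?_
  by_cases h : G.Adj x y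
  · rw [if_pos h, if_pos h.symm]
  · rw [if_neg h, if_neg fun h' => h h'.symm]

lemma degree_pos_conn (hconn : G.Connected) (hcard : 1 < Fintype.card V) (x : V) :
    0 < G.degree x := by
  obtain ⟨y, hy⟩ := Fintype.exists_ne_of_one_lt_card hcard x
  obtain ⟨p⟩ := hconn x y
  cases p with
  | nil => exact absurd rfl hy
  | cons h _ => exact (G.degree_pos_iff_exists_adj x).mpr ⟨_, h⟩

lemma walk_le_length {f : V → ℝ} {L : ℝ} (hL : 0 ≤ L)
    (hadj : ∀ u v : V, G.Adj u v → f u - f v ≤ L) :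
    ∀ {u v : V} (p : G.Walk u v), f u - f v ≤ L * p.length := by
  intro u v p
  induction p with
  | nil => simp
  | @cons a b w h q ih =>
    have h1 := hadj a b h
    rw [SimpleGraph.Walk.length_cons]
    push_cast
    linarith

lemma eq_of_walk {f : V → ℝ} (hadj : ∀ u v : V, G.Adj u v → f u = f v) :
    ∀ {u v : V} (p : G.Walk u v), f u = f v := by
  intro u v p
  induction p with
  | nil => rfl
  | @cons a b w h q ih => rw [hadj a b h, ih]

lemma telescope (hconn : G.Connected) (hdeg : ∀ z : V, 0 < G.degree z)
    {α : ℝ} (hα : α ∈ Set.Ioo (0:ℝ) 1) :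
    ∀ {u w : V} (p : G.Walk u w),
      (∑ z, mMeas G α u z * (G.dist z w : ℝ)) - (∑ z, mMeas G α w z * (G.dist z w : ℝ))
        ≤ (p.length : ℝ)
          - (1 - α) * (p.darts.map (fun d => kappaAlpha G α d.fst d.snd / (1 - α))).sum := by
  intro u w p
  induction p with
  | nil => simp
  | @cons a b w h q ih =>
    have hne1 : α ≠ 1 := by intro hh; rw [hh] at hα; exact absurd hα.2 (lt_irrefl 1)
    have hlip : ∀ x' y' : V, (G.dist x' w : ℝ) - (G.dist y' w : ℝ) ≤ 1 * (G.dist x' y' : ℝ) := by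
      intro x' y'
      have := hconn.dist_triangle (u := x') (v := y') (w := w)
      have h2 : (G.dist x' w : ℝ) ≤ (G.dist x' y' : ℝ) + (G.dist y' w : ℝ) := by exact_mod_cast this
      linarith
    have hstep := sum_sub_le_wass G (mMeas_coupling G hdeg hα.1.le hα.2.le a b)
        (g := fun z => (G.dist z w : ℝ)) one_pos hlip
    rw [one_mul, wass_adj_eq h hne1] at hstep
    rw [SimpleGraph.Walk.length_cons, SimpleGraph.Walk.darts_cons, List.map_cons, List.sum_cons]
    push_cast
    have hq := ih
    linarith

lemma tendsto_dart_sum (hconn : G.Connected) (hdeg : ∀ z : V, 0 < G.degree z) :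
    ∀ l : List G.Dart,
      Filter.Tendsto (fun α => (l.map (fun d => kappaAlpha G α d.fst d.snd / (1 - α))).sum)
        (𝓝[<] (1:ℝ)) (𝓝 ((l.map (fun d => kappa G d.fst d.snd)).sum)) := by
  intro l
  induction l with
  | nil => simpa using tendsto_const_nhds
  | cons d t ih =>
    simp only [List.map_cons, List.sum_cons]
    exact (gfun_tendsto hconn d.adj hdeg).add ih

lemma dart_sum_lower {κ₀ : ℝ} (h : ∀ x y : V, G.Adj x y → κ₀ ≤ kappa G x y) :
    ∀ l : List G.Dart, κ₀ * l.length ≤ (l.map (fun d => kappa G d.fst d.snd)).sum := by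
  intro l
  induction l with
  | nil => simp
  | cons d t ih =>
    simp only [List.map_cons, List.sum_cons, List.length_cons]
    push_cast
    have := h d.fst d.snd d.adj
    linarith

end Aux
set_option maxHeartbeats 2000000 in
theorem stmt13_aux {V : Type*} [Fintype V] [DecidableEq V] [Nonempty V]
    (G : SimpleGraph V) [DecidableRel G.Adj]
    (hconn : G.Connected) (hcard : 1 < Fintype.card V)
    (κ₀ : ℝ) (hκ₀ : 0 < κ₀) (h : ∀ x y : V, G.Adj x y → κ₀ ≤ kappa G x y)
    (lam : ℝ) (hlam : lam ≠ 0) (f : V → ℝ) (hf : f ≠ 0)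
    (heig : ∀ x, lap G f x = lam * f x) :
    ((Finset.univ.sup' Finset.univ_nonempty fun v => G.degree v : ℕ) : ℝ) *
        ((Finset.univ.inf' Finset.univ_nonempty fun v => G.degree v : ℕ) : ℝ) * κ₀ ^ 2 /
      (κ₀ * ((Finset.univ.sup' Finset.univ_nonempty fun v => G.degree v : ℕ) : ℝ) +
        2 * (((Finset.univ.sup' Finset.univ_nonempty fun v => G.degree v : ℕ) : ℝ) -
              ((Finset.univ.inf' Finset.univ_nonempty fun v => G.degree v : ℕ) : ℝ))) ≤ lam := by
  classical
  have hdeg : ∀ z : V, 0 < G.degree z := degree_pos_conn hconn hcard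
  set Dn : ℕ := Finset.univ.sup' Finset.univ_nonempty fun v => G.degree v with hDn
  set dn : ℕ := Finset.univ.inf' Finset.univ_nonempty fun v => G.degree v with hdn
  have hδ1 : (1:ℝ) ≤ (dn:ℝ) := by
    have : 1 ≤ dn := Finset.le_inf' _ _ fun b _ => hdeg b
    exact_mod_cast this
  have hdlow : ∀ x : V, (dn:ℝ) ≤ (G.degree x : ℝ) := by
    intro x
    have : dn ≤ G.degree x := Finset.inf'_le (fun v => G.degree v) (Finset.mem_univ x)
    exact_mod_cast this
  have hdhigh : ∀ x : V, (G.degree x : ℝ) ≤ (Dn:ℝ) := by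
    intro x
    have : G.degree x ≤ Dn := Finset.le_sup' (fun v => G.degree v) (Finset.mem_univ x)
    exact_mod_cast this
  have hδD : (dn:ℝ) ≤ (Dn:ℝ) := le_trans (hdlow (Classical.arbitrary V)) (hdhigh _)
  clear_value Dn dn
  have hδpos : (0:ℝ) < (dn:ℝ) := by linarith
  have hDpos : (0:ℝ) < (Dn:ℝ) := by linarith
  -- the eigenvalue is positive
  have hNsum : ∀ x, ∑ y ∈ G.neighborFinset x, f y = (G.degree x : ℝ) * f x - lam * f x := by
    intro x
    have h1 := heig x
    unfold lap at h1
    linarith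
  have hfsum2 : 0 < ∑ x, f x ^ 2 := by
    have hex : ∃ x, f x ≠ 0 := by
      by_contra hno; push_neg at hno; exact hf (funext fun x => hno x)
    obtain ⟨x1, hx1⟩ := hex
    exact Finset.sum_pos' (fun x _ => sq_nonneg _) ⟨x1, Finset.mem_univ x1, by positivity⟩
  have hgen : ∀ (s : Finset V) (a : ℝ) (g : V → ℝ),
      ∑ y ∈ s, (a - g y)^2 = (s.card : ℝ) * a^2 - 2*a*(∑ y ∈ s, g y) + ∑ y ∈ s, (g y)^2 := by
    intro s a g
    rw [Finset.sum_congr rfl fun y _ => sub_sq a (g y), Finset.sum_add_distrib,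
      Finset.sum_sub_distrib, Finset.sum_const, nsmul_eq_mul, Finset.mul_sum]
  have hswap : ∑ x, ∑ y ∈ G.neighborFinset x, (f y)^2 = ∑ x, (G.degree x : ℝ) * (f x)^2 := by
    rw [adj_sum_comm (G := G) (fun x y => (f y)^2)]
    refine Finset.sum_congr rfl fun y _ => ?_
    rw [Finset.sum_const, SimpleGraph.card_neighborFinset_eq_degree, nsmul_eq_mul]
  have hQeq : ∑ x, ∑ y ∈ G.neighborFinset x, (f x - f y)^2 = 2 * lam * ∑ x, f x ^ 2 := by
    have h1 : ∀ x : V, ∑ y ∈ G.neighborFinset x, (f x - f y)^2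
        = (G.degree x:ℝ) * (f x)^2 - 2 * f x * ((G.degree x:ℝ) * f x - lam * f x)
          + ∑ y ∈ G.neighborFinset x, (f y)^2 := by
      intro x
      rw [hgen (G.neighborFinset x) (f x) f, SimpleGraph.card_neighborFinset_eq_degree, hNsum x]
    rw [Finset.sum_congr rfl fun x _ => h1 x, Finset.sum_add_distrib, hswap,
      ← Finset.sum_add_distrib]
    rw [Finset.mul_sum]
    refine Finset.sum_congr rfl fun x _ => by ring
  have hlampos : 0 < lam := by
    have hQ : 0 ≤ ∑ x, ∑ y ∈ G.neighborFinset x, (f x - f y)^2 := by positivity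
    rw [hQeq] at hQ
    rcases lt_trichotomy lam 0 with hl | hl | hl
    · nlinarith
    · exact absurd hl hlam
    · exact hl
  -- the eigenfunction sums to zero
  have hsumf : ∑ x, f x = 0 := by
    have h1 : lam * ∑ x, f x = ∑ x, lap G f x := by
      rw [Finset.mul_sum]
      exact Finset.sum_congr rfl fun x _ => (heig x).symm
    have h2 : ∑ x, lap G f x = 0 := by
      unfold lap
      rw [Finset.sum_sub_distrib, adj_sum_comm (G := G) (fun x y => f y)]
      have h3 : ∑ y, ∑ x ∈ G.neighborFinset y, f y = ∑ y, (G.degree y:ℝ) * f y :=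
        Finset.sum_congr rfl fun y _ => by
          rw [Finset.sum_const, SimpleGraph.card_neighborFinset_eq_degree, nsmul_eq_mul]
      rw [h3, sub_self]
    rw [h2] at h1
    exact (mul_eq_zero.mp h1).resolve_left hlam
  -- the Lipschitz constant
  set P : Finset (V × V) := Finset.univ.filter (fun p => G.Adj p.1 p.2) with hP
  have hPne : P.Nonempty := by
    obtain ⟨w, hw⟩ := (G.degree_pos_iff_exists_adj (Classical.arbitrary V)).mp (hdeg _)
    exact ⟨(Classical.arbitrary V, w), by simp [hP, hw]⟩
  set L : ℝ := P.sup' hPne (fun p => f p.1 - f p.2) with hLdef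
  have hLadj : ∀ u v : V, G.Adj u v → f u - f v ≤ L := by
    intro u v huv
    rw [hLdef]
    exact Finset.le_sup' (fun p : V × V => f p.1 - f p.2)
      (by simp [hP, huv] : ((u,v) : V × V) ∈ P)
  clear_value L
  have hLpos : 0 < L := by
    have hne : ∃ u v : V, G.Adj u v ∧ f u ≠ f v := by
      by_contra hno
      push_neg at hno
      have hconst : ∀ u v : V, f u = f v := by
        intro u v
        obtain ⟨p⟩ := hconn u v
        exact eq_of_walk (fun a b hab => hno a b hab) p
      obtain ⟨x1, hx1⟩ : ∃ x, f x ≠ 0 := by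
        by_contra hno2; push_neg at hno2; exact hf (funext fun x => hno2 x)
      have hlz : lap G f x1 = 0 := by
        unfold lap
        rw [Finset.sum_congr rfl fun y _ => (hconst y x1), Finset.sum_const,
          SimpleGraph.card_neighborFinset_eq_degree, nsmul_eq_mul, sub_self]
      rw [heig x1] at hlz
      exact hx1 ((mul_eq_zero.mp hlz).resolve_left hlam)
    obtain ⟨u, v, huv, hfuv⟩ := hne
    have h1 := hLadj u v huv
    have h2 := hLadj v u huv.symm
    rcases lt_or_gt_of_ne hfuv with hlt | hgt
    · linarith
    · linarith
  have hlip : ∀ u v : V, f u - f v ≤ L * (G.dist u v : ℝ) := by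
    intro u v
    obtain ⟨p, hp⟩ := hconn.exists_walk_length_eq_dist u v
    have h1 := walk_le_length hLpos.le hLadj p
    rw [hp] at h1
    exact h1
  -- diameter bound
  have hdiam : ∀ u v : V, κ₀ * (G.dist u v : ℝ) ≤ 2 := by
    intro u v
    obtain ⟨p, hp⟩ := hconn.exists_walk_length_eq_dist u v
    have hS2 : ∀ α ∈ Set.Ioo (0:ℝ) 1,
        (p.darts.map (fun d => kappaAlpha G α d.fst d.snd / (1 - α))).sum ≤ 2 := by
      intro α hα
      have h1α : (0:ℝ) < 1 - α := by linarith [hα.2]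
      have htel := telescope hconn hdeg hα p
      have hux : ∑ z, mMeas G α u z * (G.dist z v : ℝ)
          = α * (G.dist u v : ℝ)
            + (1 - α) / (G.degree u : ℝ) * ∑ z ∈ G.neighborFinset u, (G.dist z v : ℝ) :=
        sum_mMeas_mul G α u _
      have hvx : ∑ z, mMeas G α v z * (G.dist z v : ℝ)
          = α * (G.dist v v : ℝ)
            + (1 - α) / (G.degree v : ℝ) * ∑ z ∈ G.neighborFinset v, (G.dist z v : ℝ) :=
        sum_mMeas_mul G α v _
      have hvv : (G.dist v v : ℝ) = 0 := by rw [SimpleGraph.dist_self]; norm_num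
      have hvsum : ∑ z ∈ G.neighborFinset v, (G.dist z v : ℝ) = (G.degree v : ℝ) := by
        rw [Finset.sum_congr rfl fun z hz => ?_, Finset.sum_const,
          SimpleGraph.card_neighborFinset_eq_degree, nsmul_eq_mul, mul_one]
        rw [SimpleGraph.dist_comm, adj_dist_one ((SimpleGraph.mem_neighborFinset _ _ _).mp hz)]
        norm_num
      have husum : (G.degree u : ℝ) * ((G.dist u v : ℝ) - 1)
          ≤ ∑ z ∈ G.neighborFinset u, (G.dist z v : ℝ) := by
        have hzz : ∀ z ∈ G.neighborFinset u, (G.dist u v : ℝ) - 1 ≤ (G.dist z v : ℝ) := by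
          intro z hz
          have hadj : G.Adj u z := (SimpleGraph.mem_neighborFinset _ _ _).mp hz
          have ht := hconn.dist_triangle (u := u) (v := z) (w := v)
          have h2 : (G.dist u v : ℝ) ≤ (G.dist u z : ℝ) + (G.dist z v : ℝ) := by exact_mod_cast ht
          rw [adj_dist_one hadj] at h2
          push_cast at h2
          linarith
        calc (G.degree u : ℝ) * ((G.dist u v : ℝ) - 1)
            = ∑ _z ∈ G.neighborFinset u, ((G.dist u v : ℝ) - 1) := by
              rw [Finset.sum_const, SimpleGraph.card_neighborFinset_eq_degree, nsmul_eq_mul]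
          _ ≤ ∑ z ∈ G.neighborFinset u, (G.dist z v : ℝ) := Finset.sum_le_sum hzz
      have hdu : (0:ℝ) < (G.degree u : ℝ) := by exact_mod_cast hdeg u
      have hdvne : (G.degree v : ℝ) ≠ 0 := Nat.cast_ne_zero.mpr (hdeg v).ne'
      have hvterm : (1 - α) / (G.degree v : ℝ) * (G.degree v : ℝ) = 1 - α := by
        field_simp
      rw [hux, hvx, hvv, hvsum, hvterm, hp] at htel
      have hlb : (1 - α) * ((G.dist u v : ℝ) - 1)
          ≤ (1 - α) / (G.degree u : ℝ) * ∑ z ∈ G.neighborFinset u, (G.dist z v : ℝ) := by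
        have h0 := mul_le_mul_of_nonneg_left husum (le_of_lt (div_pos h1α hdu))
        have hrw : (1 - α) / (G.degree u : ℝ) * ((G.degree u : ℝ) * ((G.dist u v : ℝ) - 1))
            = (1 - α) * ((G.dist u v : ℝ) - 1) := by
          field_simp
        rw [hrw] at h0
        exact h0
      nlinarith [htel, hlb, h1α]
    have hev : ∀ᶠ α in 𝓝[<] (1:ℝ),
        (p.darts.map (fun d => kappaAlpha G α d.fst d.snd / (1 - α))).sum ≤ 2 := by
      filter_upwards [Ioo_mem_nhdsLT zero_lt_one] with α hα using hS2 α hα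
    have hlim : (p.darts.map (fun d => kappa G d.fst d.snd)).sum ≤ 2 :=
      le_of_tendsto (tendsto_dart_sum hconn hdeg p.darts) hev
    have hlow := dart_sum_lower h p.darts
    rw [SimpleGraph.Walk.length_darts, hp] at hlow
    linarith
  -- bound on |f|
  have hfbd : ∀ z : V, |f z| ≤ 2 / κ₀ * L := by
    have hdistbd : ∀ u v : V, (G.dist u v : ℝ) ≤ 2 / κ₀ := by
      intro u v
      rw [le_div_iff₀ hκ₀]
      linarith [hdiam u v]
    have hzneg : ∃ z, f z ≤ 0 := by
      by_contra hno; push_neg at hno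
      have hpos : 0 < ∑ x, f x := Finset.sum_pos (fun x _ => hno x) Finset.univ_nonempty
      rw [hsumf] at hpos; exact lt_irrefl 0 hpos
    have hzpos : ∃ z, 0 ≤ f z := by
      by_contra hno; push_neg at hno
      have hneg : ∑ x, f x < 0 :=
        Finset.sum_neg (fun x _ => hno x) Finset.univ_nonempty
      rw [hsumf] at hneg; exact lt_irrefl 0 hneg
    intro z
    obtain ⟨zn, hzn⟩ := hzneg
    obtain ⟨zp, hzp⟩ := hzpos
    rw [abs_le]
    constructor
    · have h1 := hlip zp z
      have h2 : L * (G.dist zp z : ℝ) ≤ L * (2/κ₀) :=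
        mul_le_mul_of_nonneg_left (hdistbd zp z) hLpos.le
      nlinarith
    · have h1 := hlip z zn
      have h2 : L * (G.dist z zn : ℝ) ≤ L * (2/κ₀) :=
        mul_le_mul_of_nonneg_left (hdistbd z zn) hLpos.le
      nlinarith
  -- maximizing adjacent pair
  obtain ⟨p₀, hp₀mem, hp₀⟩ := Finset.exists_mem_eq_sup' hPne (fun p : V × V => f p.1 - f p.2)
  have hadj₀ : G.Adj p₀.1 p₀.2 := (Finset.mem_filter.mp hp₀mem).2
  have hfx₀ : f p₀.1 - f p₀.2 = L := by rw [hLdef]; exact hp₀.symm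
  -- main inequality at each α
  have hmx : ∀ {α : ℝ}, α ∈ Set.Ioo (0:ℝ) 1 → ∀ x : V, ∑ z, mMeas G α x z * f z
      = f x - (1 - α) * lam * f x / (G.degree x : ℝ) := by
    intro α hα x
    rw [sum_mMeas_mul, hNsum x]
    have hdx : (G.degree x:ℝ) ≠ 0 := Nat.cast_ne_zero.mpr (hdeg x).ne'
    field_simp
    ring
  have hmain : ∀ α ∈ Set.Ioo (0:ℝ) 1,
      (kappaAlpha G α p₀.1 p₀.2 / (1 - α)) * L
        ≤ lam * (f p₀.1 / (G.degree p₀.1 : ℝ) - f p₀.2 / (G.degree p₀.2 : ℝ)) := by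
    intro α hα
    have h1α : (0:ℝ) < 1 - α := by linarith [hα.2]
    have hne1 : α ≠ 1 := by intro hh; rw [hh] at hα; exact absurd hα.2 (lt_irrefl 1)
    have hdual := sum_sub_le_wass G (mMeas_coupling G hdeg hα.1.le hα.2.le p₀.1 p₀.2) hLpos hlip
    rw [wass_adj_eq hadj₀ hne1, hmx hα p₀.1, hmx hα p₀.2] at hdual
    set q : ℝ := kappaAlpha G α p₀.1 p₀.2 / (1 - α) with hq
    clear_value q
    have hgoal : (1-α) * (q * L)
        ≤ (1-α) * (lam * (f p₀.1 / (G.degree p₀.1 : ℝ) - f p₀.2 / (G.degree p₀.2 : ℝ))) := by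
      ring_nf at hdual ⊢
      linarith [hdual, hfx₀]
    exact le_of_mul_le_mul_left hgoal h1α
  have hT : kappa G p₀.1 p₀.2 * L
      ≤ lam * (f p₀.1 / (G.degree p₀.1 : ℝ) - f p₀.2 / (G.degree p₀.2 : ℝ)) := by
    refine le_of_tendsto ((gfun_tendsto hconn hadj₀ hdeg).mul_const L) ?_
    filter_upwards [Ioo_mem_nhdsLT zero_lt_one] with α hα using hmain α hα
  have hκT : κ₀ * L ≤ lam * (f p₀.1 / (G.degree p₀.1 : ℝ) - f p₀.2 / (G.degree p₀.2 : ℝ)) :=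
    le_trans (mul_le_mul_of_nonneg_right (h p₀.1 p₀.2 hadj₀) hLpos.le) hT
  -- final algebra
  have hdx1 : (dn:ℝ) ≤ (G.degree p₀.1 : ℝ) := hdlow _
  have hdx2 : (G.degree p₀.1 : ℝ) ≤ (Dn:ℝ) := hdhigh _
  have hdy1 : (dn:ℝ) ≤ (G.degree p₀.2 : ℝ) := hdlow _
  have hdy2 : (G.degree p₀.2 : ℝ) ≤ (Dn:ℝ) := hdhigh _
  have hdxpos : (0:ℝ) < (G.degree p₀.1 : ℝ) := by exact_mod_cast hdeg p₀.1
  have hdypos : (0:ℝ) < (G.degree p₀.2 : ℝ) := by exact_mod_cast hdeg p₀.2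
  have hinv : |1/(G.degree p₀.1 : ℝ) - 1/(G.degree p₀.2 : ℝ)| ≤ 1/(dn:ℝ) - 1/(Dn:ℝ) := by
    have i1 : 1/(G.degree p₀.1 : ℝ) ≤ 1/(dn:ℝ) := one_div_le_one_div_of_le hδpos hdx1
    have i2 : 1/(Dn:ℝ) ≤ 1/(G.degree p₀.1 : ℝ) := one_div_le_one_div_of_le hdxpos hdx2
    have i3 : 1/(G.degree p₀.2 : ℝ) ≤ 1/(dn:ℝ) := one_div_le_one_div_of_le hδpos hdy1
    have i4 : 1/(Dn:ℝ) ≤ 1/(G.degree p₀.2 : ℝ) := one_div_le_one_div_of_le hdypos hdy2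
    rw [abs_le]
    constructor <;> linarith
  have hTbound : f p₀.1 / (G.degree p₀.1 : ℝ) - f p₀.2 / (G.degree p₀.2 : ℝ)
      ≤ L / (dn:ℝ) + (2/κ₀*L) * (1/(dn:ℝ) - 1/(Dn:ℝ)) := by
    have e1 : f p₀.1 / (G.degree p₀.1 : ℝ)
        = f p₀.2 / (G.degree p₀.1 : ℝ) + L / (G.degree p₀.1 : ℝ) := by
      rw [← add_div]
      congr 1
      linarith [hfx₀]
    have e2 : L / (G.degree p₀.1 : ℝ) ≤ L / (dn:ℝ) :=
      div_le_div_of_nonneg_left hLpos.le hδpos hdx1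
    have e3 : f p₀.2 / (G.degree p₀.1 : ℝ) - f p₀.2 / (G.degree p₀.2 : ℝ)
        ≤ (2/κ₀*L) * (1/(dn:ℝ) - 1/(Dn:ℝ)) := by
      have e4 : f p₀.2 / (G.degree p₀.1 : ℝ) - f p₀.2 / (G.degree p₀.2 : ℝ)
          = f p₀.2 * (1/(G.degree p₀.1 : ℝ) - 1/(G.degree p₀.2 : ℝ)) := by ring
      rw [e4]
      calc f p₀.2 * (1/(G.degree p₀.1 : ℝ) - 1/(G.degree p₀.2 : ℝ))
          ≤ |f p₀.2 * (1/(G.degree p₀.1 : ℝ) - 1/(G.degree p₀.2 : ℝ))| := le_abs_self _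
        _ = |f p₀.2| * |1/(G.degree p₀.1 : ℝ) - 1/(G.degree p₀.2 : ℝ)| := abs_mul _ _
        _ ≤ (2/κ₀*L) * (1/(dn:ℝ) - 1/(Dn:ℝ)) := by
            apply mul_le_mul (hfbd p₀.2) hinv (abs_nonneg _)
            positivity
    linarith [e1, e2, e3]
  have hfinal : κ₀ * L ≤ lam * (L / (dn:ℝ) + (2/κ₀*L) * (1/(dn:ℝ) - 1/(Dn:ℝ))) :=
    le_trans hκT (mul_le_mul_of_nonneg_left hTbound hlampos.le)
  have hden : (0:ℝ) < κ₀ * (Dn:ℝ) + 2 * ((Dn:ℝ) - (dn:ℝ)) := by nlinarith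
  rw [div_le_iff₀ hden]
  have hid : (L / (dn:ℝ) + (2/κ₀*L) * (1/(dn:ℝ) - 1/(Dn:ℝ))) * (κ₀ * (dn:ℝ) * (Dn:ℝ))
      = L * (κ₀ * (Dn:ℝ) + 2 * ((Dn:ℝ) - (dn:ℝ))) := by
    field_simp
  have h2 : κ₀ * L * (κ₀ * (dn:ℝ) * (Dn:ℝ))
      ≤ lam * (L * (κ₀ * (Dn:ℝ) + 2 * ((Dn:ℝ) - (dn:ℝ)))) := by
    calc κ₀ * L * (κ₀ * (dn:ℝ) * (Dn:ℝ))
        ≤ lam * (L / (dn:ℝ) + (2/κ₀*L) * (1/(dn:ℝ) - 1/(Dn:ℝ))) * (κ₀ * (dn:ℝ) * (Dn:ℝ)) := by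
          apply mul_le_mul_of_nonneg_right hfinal (by positivity)
      _ = lam * ((L / (dn:ℝ) + (2/κ₀*L) * (1/(dn:ℝ) - 1/(Dn:ℝ))) * (κ₀ * (dn:ℝ) * (Dn:ℝ))) := by
          ring
      _ = lam * (L * (κ₀ * (Dn:ℝ) + 2 * ((Dn:ℝ) - (dn:ℝ)))) := by rw [hid]
  have h3 : L * ((Dn:ℝ) * (dn:ℝ) * κ₀ ^ 2)
      ≤ L * (lam * (κ₀ * (Dn:ℝ) + 2 * ((Dn:ℝ) - (dn:ℝ)))) := by nlinarith [h2]
  exact le_of_mul_le_mul_left h3 hLpos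

theorem stmt13 {V : Type*} [Fintype V] [DecidableEq V] [Nonempty V]
    (G : SimpleGraph V) [DecidableRel G.Adj]
    (hconn : G.Connected) (hcard : 1 < Fintype.card V)
    (κ₀ : ℝ) (hκ₀ : 0 < κ₀) (h : ∀ x y : V, G.Adj x y → κ₀ ≤ kappa G x y)
    (lam : ℝ) (hlam : lam ≠ 0) (f : V → ℝ) (hf : f ≠ 0)
    (heig : ∀ x, lap G f x = lam * f x) :
    ((Finset.univ.sup' Finset.univ_nonempty fun v => G.degree v : ℕ) : ℝ) *
        ((Finset.univ.inf' Finset.univ_nonempty fun v => G.degree v : ℕ) : ℝ) * κ₀ ^ 2 /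
      (κ₀ * ((Finset.univ.sup' Finset.univ_nonempty fun v => G.degree v : ℕ) : ℝ) +
        2 * (((Finset.univ.sup' Finset.univ_nonempty fun v => G.degree v : ℕ) : ℝ) -
              ((Finset.univ.inf' Finset.univ_nonempty fun v => G.degree v : ℕ) : ℝ))) ≤ lam := by
  exact stmt13_aux G hconn hcard κ₀ hκ₀ h lam hlam f hf heig
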